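/- Let T be a tree rooted at r. Then r is α-critical in T if and only if for every child a of r, the vertex a is not α-critical in the subtree T_a rooted at a. -/

import Mathlib

open SimpleGraph

/-- The maximum size of an independent set of `G` contained in the vertex set `A`
(i.e. the independence number of the induced subgraph `G[A]`). -/
noncomputable def alphaOn {V : Type*} [Fintype V] (G : SimpleGraph V) (A : Set V) : ℕ :=
  sSup {n | ∃ s : Finset V, ↑s ⊆ A ∧ (↑s : Set V).Pairwise (fun a b => ¬ G.Adj a b) ∧ s.card = n}

/-- The open neighborhood of a set of vertices. -/
def nbhd {V : Type*} (G : SimpleGraph V) (S : Set V) : Set V :=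
  {v | v ∉ S ∧ ∃ u ∈ S, G.Adj u v}

/-- `v` is α-critical in the induced subgraph `G[A]`. -/
def critOn {V : Type*} [Fintype V] (G : SimpleGraph V) (A : Set V) (v : V) : Prop :=
  alphaOn G A = 1 + alphaOn G (A \ {v})

/-- For a tree `T` rooted at `r`, the vertex set of the subtree rooted at `a`:
those vertices reachable from `a` without passing through `r`. -/
def descend {V : Type*} (T : SimpleGraph V) (r a : V) : Set V :=
  {v | ∃ p : T.Walk a v, r ∉ p.support}

/-- The connected component of `v₀` in `G - X`: vertices reachable from `v₀` avoiding `X`. -/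
def avoidComp {V : Type*} (G : SimpleGraph V) (X : Set V) (v₀ : V) : Set V :=
  {v | ∃ p : G.Walk v₀ v, ∀ x ∈ p.support, x ∉ X}

section AuxAlpha

variable {V : Type*} [Fintype V] (G : SimpleGraph V)

lemma bddAbove_alphaSet (A : Set V) :
    BddAbove {n | ∃ s : Finset V, ↑s ⊆ A ∧ (↑s : Set V).Pairwise (fun a b => ¬ G.Adj a b) ∧
      s.card = n} := by
  refine ⟨Fintype.card V, ?_⟩
  rintro n ⟨s, -, -, rfl⟩
  exact s.card_le_univ

lemma le_alphaOn {A : Set V} {s : Finset V} (h1 : ↑s ⊆ A)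
    (h2 : (↑s : Set V).Pairwise (fun a b => ¬ G.Adj a b)) : s.card ≤ alphaOn G A :=
  le_csSup (bddAbove_alphaSet G A) ⟨s, h1, h2, rfl⟩

lemma exists_alphaOn (A : Set V) :
    ∃ s : Finset V, ↑s ⊆ A ∧ (↑s : Set V).Pairwise (fun a b => ¬ G.Adj a b) ∧
      s.card = alphaOn G A := by
  have hne : {n | ∃ s : Finset V, ↑s ⊆ A ∧ (↑s : Set V).Pairwise (fun a b => ¬ G.Adj a b) ∧
      s.card = n}.Nonempty := ⟨0, ∅, by simp⟩
  exact Nat.sSup_mem hne (bddAbove_alphaSet G A)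

lemma alphaOn_mono {A B : Set V} (h : A ⊆ B) : alphaOn G A ≤ alphaOn G B := by
  obtain ⟨s, h1, h2, h3⟩ := exists_alphaOn G A
  rw [← h3]
  exact le_alphaOn G (h1.trans h) h2

lemma alphaOn_drop (A : Set V) (v : V) : alphaOn G A ≤ 1 + alphaOn G (A \ {v}) := by
  classical
  obtain ⟨s, h1, h2, h3⟩ := exists_alphaOn G A
  have he1 : ↑(s.erase v) ⊆ A \ {v} := by
    rw [Finset.coe_erase]
    exact Set.diff_subset_diff_left h1
  have he2 : (↑(s.erase v) : Set V).Pairwise (fun a b => ¬ G.Adj a b) :=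
    h2.mono (by exact_mod_cast Finset.erase_subset v s)
  have hcard : s.card ≤ (s.erase v).card + 1 := by
    have : s ⊆ insert v (s.erase v) := by
      intro x hx
      by_cases hxv : x = v
      · simp [hxv]
      · exact Finset.mem_insert_of_mem (Finset.mem_erase.2 ⟨hxv, hx⟩)
    calc s.card ≤ (insert v (s.erase v)).card := Finset.card_le_card this
      _ ≤ (s.erase v).card + 1 := Finset.card_insert_le _ _
  have := le_alphaOn G he1 he2
  omega

end AuxAlpha

section AuxTree

variable {V : Type*} (T : SimpleGraph V)

lemma mem_descend_self {r a : V} (h : T.Adj r a) : a ∈ descend T r a :=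
  ⟨Walk.nil, by simpa using h.ne⟩

lemma root_not_mem_descend (r a : V) : r ∉ descend T r a :=
  fun ⟨p, hp⟩ => hp p.end_mem_support

lemma adj_descend_closed {r a v w : V} (hv : v ∈ descend T r a) (hadj : T.Adj v w)
    (hw : w ≠ r) : w ∈ descend T r a := by
  obtain ⟨p, hp⟩ := hv
  refine ⟨p.concat hadj, ?_⟩
  intro h
  rw [Walk.support_concat, List.mem_append] at h
  rcases h with h | h
  · exact hp h
  · simp at h
    exact hw h.symm

lemma child_eq [DecidableEq V] (hT : T.IsTree) {r a b : V} (hra : T.Adj r a) (hrb : T.Adj r b)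
    (hb : b ∈ descend T r a) : b = a := by
  obtain ⟨p, hp⟩ := hb
  have hq : r ∉ p.bypass.support := fun h => hp (p.support_bypass_subset h)
  have h1 : (Walk.cons hra p.bypass).IsPath := (p.bypass_isPath).cons hq
  have h2 : (Walk.cons hrb Walk.nil).IsPath := Walk.IsPath.nil.cons (by simpa using hrb.ne)
  have heq := (hT.existsUnique_path r b).unique h1 h2
  have hsup := congrArg Walk.support heq
  rw [Walk.support_cons, Walk.support_cons, Walk.support_nil] at hsup
  have : p.bypass.support = [b] := by
    injection hsup
  have h3 := p.bypass.support_eq_cons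
  rw [this] at h3
  injection h3 with h3 _

end AuxTree

lemma swap_lemma {V : Type*} [Fintype V] [DecidableEq V] (T : SimpleGraph V) {r a : V}
    (hra : T.Adj r a) [DecidablePred (· ∈ descend T r a)] (s m : Finset V)
    (hs : ↑s ⊆ Set.univ \ {r})
    (hsp : (↑s : Set V).Pairwise (fun x y => ¬ T.Adj x y))
    (hm : ↑m ⊆ descend T r a)
    (hmp : (↑m : Set V).Pairwise (fun x y => ¬ T.Adj x y)) :
    ↑(s.filter (· ∉ descend T r a) ∪ m) ⊆ Set.univ \ {r} ∧
    (↑(s.filter (· ∉ descend T r a) ∪ m) : Set V).Pairwise (fun x y => ¬ T.Adj x y) ∧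
    (s.filter (· ∉ descend T r a)).card + m.card = (s.filter (· ∉ descend T r a) ∪ m).card := by
  have hcross : ∀ x ∈ s.filter (· ∉ descend T r a), ∀ y ∈ m, ¬ T.Adj x y := by
    intro x hx y hy hadj
    rw [Finset.mem_filter] at hx
    have hxr : x ≠ r := fun h => (hs hx.1).2 (by simpa using h)
    exact hx.2 (adj_descend_closed T (hm hy) hadj.symm hxr)
  refine ⟨?_, ?_, ?_⟩
  · intro x hx
    rcases Finset.mem_union.1 (by exact_mod_cast hx) with h | h
    · exact hs (Finset.filter_subset _ _ h)
    · refine ⟨trivial, fun hc => ?_⟩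
      have hxr : x = r := hc
      exact root_not_mem_descend T r a (hxr ▸ hm h)
  · intro x hx y hy hxy
    rcases Finset.mem_union.1 (by exact_mod_cast hx) with h1 | h1 <;>
      rcases Finset.mem_union.1 (by exact_mod_cast hy) with h2 | h2
    · exact hsp (Finset.filter_subset _ _ h1) (Finset.filter_subset _ _ h2) hxy
    · exact hcross x h1 y h2
    · intro hadj; exact hcross y h2 x h1 hadj.symm
    · exact hmp h1 h2 hxy
  · rw [Finset.card_union_of_disjoint]
    rw [Finset.disjoint_left]
    intro x hx hx'
    exact (Finset.mem_filter.1 hx).2 (hm hx')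

theorem stmt2 {V : Type*} [Fintype V] (T : SimpleGraph V) (hT : T.IsTree) (r : V) :
    critOn T Set.univ r ↔ ∀ a : V, T.Adj r a → ¬ critOn T (descend T r a) a := by
  classical
  unfold critOn
  constructor
  · rintro hcrit a hra hacrit
    obtain ⟨S, hS1, hS2, hS3⟩ := exists_alphaOn T Set.univ
    have hrS : r ∈ S := by
      by_contra hr
      have hsub : ↑S ⊆ Set.univ \ {r} := by
        intro x hx
        refine ⟨trivial, ?_⟩
        rintro rfl
        exact hr (by exact_mod_cast hx)
      have h1 := le_alphaOn T hsub hS2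
      rw [hS3, hcrit] at h1
      omega
    set s := S.erase r with hs_def
    have hs1 : ↑s ⊆ Set.univ \ {r} := by
      intro x hx
      have hx' : x ∈ s := by exact_mod_cast hx
      exact ⟨trivial, fun h => (Finset.mem_erase.1 hx').1 (by simpa using h)⟩
    have hs2 : (↑s : Set V).Pairwise (fun x y => ¬ T.Adj x y) :=
      hS2.mono (by exact_mod_cast Finset.erase_subset r S)
    have hscard : s.card + 1 = S.card := Finset.card_erase_add_one hrS
    obtain ⟨m, hm1, hm2, hm3⟩ := exists_alphaOn T (descend T r a)
    have haS : a ∉ s := by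
      intro h
      have haS' : a ∈ S := Finset.mem_of_mem_erase h
      exact hS2 (by exact_mod_cast hrS) (by exact_mod_cast haS') hra.ne hra
    have hfilter : (s.filter (· ∈ descend T r a)).card ≤ alphaOn T (descend T r a \ {a}) := by
      apply le_alphaOn
      · intro x hx
        have hx' : x ∈ s.filter (· ∈ descend T r a) := by exact_mod_cast hx
        rw [Finset.mem_filter] at hx'
        refine ⟨hx'.2, ?_⟩
        rintro rfl
        exact haS hx'.1
      · exact hs2.mono (by exact_mod_cast Finset.filter_subset _ s)
    obtain ⟨hu1, hu2, hu3⟩ := swap_lemma T hra s m hs1 hs2 hm1 hm2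
    have hbig := le_alphaOn T hu1 hu2
    have hsplit := Finset.card_filter_add_card_filter_not
      (p := (· ∈ descend T r a)) (s := s)
    omega
  · intro hnc
    have hle := alphaOn_drop T Set.univ r
    have hchild : ∀ a, T.Adj r a →
        alphaOn T (descend T r a) ≤ alphaOn T (descend T r a \ {a}) := by
      intro a hra
      have h1 := alphaOn_drop T (descend T r a) a
      have h2 : alphaOn T (descend T r a \ {a}) ≤ alphaOn T (descend T r a) :=
        alphaOn_mono T Set.diff_subset
      have h3 := hnc a hra
      omega
    have claim : ∀ n : ℕ, ∀ s : Finset V, ↑s ⊆ Set.univ \ {r} →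
        (↑s : Set V).Pairwise (fun x y => ¬ T.Adj x y) →
        (s.filter (fun b => T.Adj r b)).card = n →
        ∃ t : Finset V, ↑t ⊆ Set.univ \ {r} ∧
          (↑t : Set V).Pairwise (fun x y => ¬ T.Adj x y) ∧ s.card ≤ t.card ∧
          t.filter (fun b => T.Adj r b) = ∅ := by
      intro n
      induction n using Nat.strong_induction_on with
      | _ n ih =>
        intro s hs1 hs2 hsn
        by_cases hempty : s.filter (fun b => T.Adj r b) = ∅
        · exact ⟨s, hs1, hs2, le_rfl, hempty⟩
        · obtain ⟨a, ha⟩ := Finset.nonempty_iff_ne_empty.2 hempty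
          rw [Finset.mem_filter] at ha
          obtain ⟨haS, hra⟩ := ha
          obtain ⟨m, hm1, hm2, hm3⟩ := exists_alphaOn T (descend T r a \ {a})
          have hm1' : ↑m ⊆ descend T r a := hm1.trans Set.diff_subset
          obtain ⟨hu1, hu2, hu3⟩ := swap_lemma T hra s m hs1 hs2 hm1' hm2
          set s' := s.filter (· ∉ descend T r a) ∪ m with hs'_def
          have hfle : (s.filter (· ∈ descend T r a)).card ≤ m.card := by
            rw [hm3]
            refine le_trans (le_alphaOn T ?_
              (hs2.mono (by exact_mod_cast Finset.filter_subset _ s))) (hchild a hra)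
            intro x hx
            have hx' : x ∈ s.filter (· ∈ descend T r a) := by exact_mod_cast hx
            exact (Finset.mem_filter.1 hx').2
          have hsplit := Finset.card_filter_add_card_filter_not
            (p := (· ∈ descend T r a)) (s := s)
          have hcard : s.card ≤ s'.card := by omega
          have hdec : (s'.filter (fun b => T.Adj r b)).card < n := by
            have hsub : s'.filter (fun b => T.Adj r b) ⊆
                (s.filter (fun b => T.Adj r b)).erase a := by
              intro b hb
              rw [Finset.mem_filter, hs'_def, Finset.mem_union] at hb
              obtain ⟨hb1, hb2⟩ := hb
              rcases hb1 with h | h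
              · rw [Finset.mem_filter] at h
                have hba : b ≠ a := by
                  rintro rfl
                  exact h.2 (mem_descend_self T hra)
                exact Finset.mem_erase.2 ⟨hba, Finset.mem_filter.2 ⟨h.1, hb2⟩⟩
              · obtain ⟨hbD, hba⟩ := hm1 h
                exact absurd (child_eq T hT hra hb2 hbD) (by simpa using hba)
            calc (s'.filter (fun b => T.Adj r b)).card
                ≤ ((s.filter (fun b => T.Adj r b)).erase a).card := Finset.card_le_card hsub
              _ < (s.filter (fun b => T.Adj r b)).card :=
                  Finset.card_erase_lt_of_mem (Finset.mem_filter.2 ⟨haS, hra⟩)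
              _ = n := hsn
          obtain ⟨t, ht1, ht2, ht3, ht4⟩ := ih _ hdec s' hu1 hu2 rfl
          exact ⟨t, ht1, ht2, hcard.trans ht3, ht4⟩
    obtain ⟨s₀, h01, h02, h03⟩ := exists_alphaOn T (Set.univ \ {r})
    obtain ⟨t, ht1, ht2, ht3, ht4⟩ := claim _ s₀ h01 h02 rfl
    have hrt : r ∉ t := fun h => (ht1 (by exact_mod_cast h)).2 rfl
    have hins1 : ↑(insert r t) ⊆ (Set.univ : Set V) := fun x _ => trivial
    have hins2 : (↑(insert r t) : Set V).Pairwise (fun x y => ¬ T.Adj x y) := by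
      intro x hx y hy hxy
      rw [Finset.coe_insert, Set.mem_insert_iff] at hx hy
      have hnoadj : ∀ z ∈ t, ¬ T.Adj r z := by
        intro z hz hadj
        have : z ∈ t.filter (fun b => T.Adj r b) := Finset.mem_filter.2 ⟨hz, hadj⟩
        rw [ht4] at this
        exact absurd this (Finset.notMem_empty z)
      rcases hx with rfl | hx <;> rcases hy with rfl | hy
      · exact absurd rfl hxy
      · exact hnoadj y (by exact_mod_cast hy)
      · intro hadj; exact hnoadj x (by exact_mod_cast hx) hadj.symm
      · exact ht2 hx hy hxy
    have hfin := le_alphaOn T hins1 hins2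
    rw [Finset.card_insert_of_notMem hrt] at hfin
    omega
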